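/- arXiv:1810.05003 — 5 statements merged into one kernel-verified Lean document; each statement's English description precedes it below -/
import Mathlib

section
/- For the k-Fibonacci sequence, F_{k,n}·F_{k,m} + F_{k,n+1}·F_{k,m+1} = F_{k,n+m+1} for all n, m ≥ 0 (the Honsberger identity for k-Fibonacci numbers). -/
open TensorProduct

noncomputable def kFib (k : ℝ) : ℕ → ℝ
  | 0 => 0
  | 1 => 1
  | n + 2 => k * kFib k (n + 1) + kFib k n

abbrev Bicomplex : Type := ℂ ⊗[ℝ] ℂ


theorem stmt1 (k : ℝ) (hk : 0 < k) (n m : ℕ) :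
    kFib k n * kFib k m + kFib k (n + 1) * kFib k (m + 1) = kFib k (n + m + 1) := by
  induction n using Nat.twoStepInduction generalizing m with
  | zero => simp [kFib]
  | one =>
    show kFib k 1 * kFib k m + kFib k 2 * kFib k (m + 1) = kFib k (1 + m + 1)
    rw [show 1 + m + 1 = m + 2 by ring]
    simp [kFib]; ring
  | more n ih1 ih2 =>
    have h1 := ih1 m
    have h2 := ih2 m
    have e1 : n + 2 + m + 1 = n + m + 1 + 2 := by ring
    have e2 : n + 1 + m + 1 = n + m + 2 := by ring
    have e3 : n + m + 1 = n + (m + 1) := by ring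
    rw [e1, show kFib k (n + m + 1 + 2) = k * kFib k (n + m + 2) + kFib k (n + m + 1) from rfl,
      show kFib k (n + 2) = k * kFib k (n + 1) + kFib k n from rfl,
      show kFib k (n + 3) = k * kFib k (n + 2) + kFib k (n + 1) from rfl]
    rw [e2] at h2
    nlinarith [h1, h2]
end

section
/- For the k-Fibonacci sequence, F_{k,n−1}·F_{k,n+3} − F_{k,n}·F_{k,n+2} = (−1)^n·(k²+1) for all n ≥ 1. -/
open TensorProduct

lemma kFib_aux (k : ℝ) (m : ℕ) :
    kFib k m * kFib k (m + 4) - kFib k (m + 1) * kFib k (m + 3)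
      = (-1 : ℝ) ^ (m + 1) * (k ^ 2 + 1) := by
  induction m with
  | zero => simp [kFib]; ring
  | succ m ih =>
      have h1 : kFib k (m + 5) = k * kFib k (m + 4) + kFib k (m + 3) := rfl
      have h2 : kFib k (m + 2) = k * kFib k (m + 1) + kFib k m := rfl
      have : kFib k (m + 1) * kFib k (m + 1 + 4) - kFib k (m + 2) * kFib k (m + 4)
          = -(kFib k m * kFib k (m + 4) - kFib k (m + 1) * kFib k (m + 3)) := by
        show kFib k (m + 1) * kFib k (m + 5) - kFib k (m + 2) * kFib k (m + 4) = _
        rw [h1, h2]; ring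
      rw [show m + 1 + 1 = m + 2 from rfl, show m + 1 + 3 = m + 4 from rfl, this, ih]
      ring

theorem stmt6 (k : ℝ) (hk : 0 < k) (n : ℕ) (hn : 1 ≤ n) :
    kFib k (n - 1) * kFib k (n + 3) - kFib k n * kFib k (n + 2) = (-1 : ℝ) ^ n * (k ^ 2 + 1) := by
  obtain ⟨m, rfl⟩ := Nat.exists_eq_add_of_le hn
  simpa [add_comm, add_assoc, add_left_comm] using kFib_aux k m
end

section
/- For the bicomplex k-Fibonacci quaternion Q_{k,n} and its i-conjugate Q_{k,n}^{*₁} = F_{k,n} − i·F_{k,n+1} + j·F_{k,n+2} − ij·F_{k,n+3}, one has Q_{k,n}·Q_{k,n}^{*₁} = F_{k,2n+1} − F_{k,2n+5} + 2j·F_{k,2n+3}. -/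
open TensorProduct

noncomputable def bi : Bicomplex := (Complex.I : ℂ) ⊗ₜ[ℝ] (1 : ℂ)
noncomputable def bj : Bicomplex := (1 : ℂ) ⊗ₜ[ℝ] (Complex.I : ℂ)

noncomputable def Q (k : ℝ) (n : ℕ) : Bicomplex :=
  algebraMap ℝ Bicomplex (kFib k n) + kFib k (n + 1) • bi
    + kFib k (n + 2) • bj + kFib k (n + 3) • (bi * bj)

lemma kFib_zero (k : ℝ) : kFib k 0 = 0 := rfl
lemma kFib_one (k : ℝ) : kFib k 1 = 1 := rfl
lemma kFib_add_two (k : ℝ) (n : ℕ) :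
    kFib k (n + 2) = k * kFib k (n + 1) + kFib k n := rfl

lemma kFib_add (k : ℝ) (m n : ℕ) :
    kFib k (m + n + 1) = kFib k m * kFib k n + kFib k (m + 1) * kFib k (n + 1) := by
  induction n using Nat.twoStepInduction generalizing m with
  | zero => simp [kFib_zero, kFib_one]
  | one =>
      show kFib k (m + 2) = _
      rw [kFib_add_two, kFib_one, kFib_add_two, kFib_zero, kFib_one]
      ring
  | more n ih1 ih2 =>
      have h1 := ih1 m
      have h2 := ih2 m
      rw [show n + 1 + 1 = n + 2 by omega] at h2
      rw [show m + (n + 2) + 1 = (m + n + 1) + 2 by omega, kFib_add_two,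
        show m + n + 1 + 1 = m + (n + 1) + 1 by omega, h2, h1,
        show n + 2 + 1 = (n + 1) + 2 by omega, kFib_add_two k (n + 1),
        show n + 1 + 1 = n + 2 by omega, kFib_add_two k n]
      ring

lemma bi_mul_bi : bi * bi = -1 := by
  simp only [bi, Algebra.TensorProduct.tmul_mul_tmul, Complex.I_mul_I, mul_one]
  rw [show ((-1 : ℂ) ⊗ₜ[ℝ] (1 : ℂ)) = -((1 : ℂ) ⊗ₜ[ℝ] (1 : ℂ)) by rw [← neg_tmul]]
  rfl

lemma bj_mul_bj : bj * bj = -1 := by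
  simp only [bj, Algebra.TensorProduct.tmul_mul_tmul, Complex.I_mul_I, mul_one]
  rw [show ((1 : ℂ) ⊗ₜ[ℝ] (-1 : ℂ)) = -((1 : ℂ) ⊗ₜ[ℝ] (1 : ℂ)) by rw [← tmul_neg]]
  rfl

theorem stmt12 (k : ℝ) (hk : 0 < k) (n : ℕ) :
    Q k n * (algebraMap ℝ Bicomplex (kFib k n) - kFib k (n + 1) • bi
        + kFib k (n + 2) • bj - kFib k (n + 3) • (bi * bj)) =
      algebraMap ℝ Bicomplex (kFib k (2 * n + 1) - kFib k (2 * n + 5))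
        + (2 * kFib k (2 * n + 3)) • bj := by
  have h1 : kFib k (2 * n + 1) = kFib k n * kFib k n + kFib k (n + 1) * kFib k (n + 1) := by
    have := kFib_add k n n; rw [show 2 * n + 1 = n + n + 1 by ring]; exact this
  have h2 : kFib k (2 * n + 5) =
      kFib k (n + 2) * kFib k (n + 2) + kFib k (n + 3) * kFib k (n + 3) := by
    have := kFib_add k (n + 2) (n + 2); rw [show 2 * n + 5 = (n + 2) + (n + 2) + 1 by ring]
    exact this
  have h3 : kFib k (2 * n + 3) =
      kFib k n * kFib k (n + 2) + kFib k (n + 1) * kFib k (n + 3) := by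
    have := kFib_add k n (n + 2); rw [show 2 * n + 3 = n + (n + 2) + 1 by ring]; exact this
  rw [h1, h2, h3]
  have hs : ∀ (r : ℝ) (x : Bicomplex), r • x = algebraMap ℝ Bicomplex r * x :=
    fun r x => Algebra.smul_def r x
  simp only [Q, hs, map_sub, map_add, map_mul, map_ofNat]
  set a := algebraMap ℝ Bicomplex (kFib k n)
  set b := algebraMap ℝ Bicomplex (kFib k (n + 1))
  set c := algebraMap ℝ Bicomplex (kFib k (n + 2))
  set d := algebraMap ℝ Bicomplex (kFib k (n + 3))
  linear_combination (-(b * b) - d * d * (bj * bj) - 2 * b * d * bj) * bi_mul_bi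
    + (c * c + d * d) * bj_mul_bj
end

section
/- For the bicomplex k-Fibonacci and k-Lucas quaternions, Q_{k,n+2} − Q_{k,n−2} = k·Q^L_{k,n} for all n ≥ 2. -/
open TensorProduct

noncomputable def kLucas (k : ℝ) : ℕ → ℝ
  | 0 => 2
  | 1 => k
  | n + 2 => k * kLucas k (n + 1) + kLucas k n

noncomputable def QL (k : ℝ) (n : ℕ) : Bicomplex :=
  algebraMap ℝ Bicomplex (kLucas k n) + kLucas k (n + 1) • bi
    + kLucas k (n + 2) • bj + kLucas k (n + 3) • (bi * bj)



lemma lucas_eq (k : ℝ) (m : ℕ) :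
    kLucas k (m + 1) = kFib k (m + 2) + kFib k m := by
  induction m using Nat.twoStepInduction with
  | zero => simp [kFib, kLucas]
  | one => simp [kFib, kLucas]; ring
  | more m ih1 ih2 =>
    have : kLucas k (m + 2 + 1) = k * kLucas k (m + 1 + 1) + kLucas k (m + 1) := rfl
    rw [this, ih1, ih2]
    show _ = (k * kFib k (m+3) + kFib k (m+2)) + (k * kFib k (m+1) + kFib k m)
    ring

lemma fib_diff (k : ℝ) (m : ℕ) :
    k * kLucas k (m + 2) = kFib k (m + 4) - kFib k m := by
  rw [lucas_eq k (m+1)]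
  show k * (kFib k (m+3) + kFib k (m+1))
      = (k * kFib k (m+3) + kFib k (m+2)) - kFib k m
  have : kFib k (m+2) = k * kFib k (m+1) + kFib k m := rfl
  rw [this]; ring

theorem stmt15 (k : ℝ) (hk : 0 < k) (n : ℕ) (hn : 2 ≤ n) :
    Q k (n + 2) - Q k (n - 2) = k • QL k n := by
  obtain ⟨m, rfl⟩ : ∃ m, n = m + 2 := ⟨n - 2, by omega⟩
  simp only [Nat.add_sub_cancel, Q, QL, Algebra.algebraMap_eq_smul_one,
    smul_add, smul_smul]
  rw [show m + 2 + 2 + 3 = m + 3 + 4 by ring, show m + 2 + 2 + 2 = m + 2 + 4 by ring,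
    show m + 2 + 2 + 1 = m + 1 + 4 by ring, show m + 2 + 2 = m + 4 by ring,
    fib_diff k m, fib_diff k (m+1), fib_diff k (m+2), fib_diff k (m+3)]
  module
end

section
/- Binet's formula for bicomplex k-Fibonacci quaternions: Q_{k,n} = (α̂·αⁿ − β̂·βⁿ)/(α − β) for all n ≥ 0, where α̂ = 1 + iα + jα² + ijα³ and β̂ = 1 + iβ + jβ² + ijβ³. -/
open TensorProduct

lemma binet_aux (k α β : ℝ) (ha : α * α = k * α + 1) (hb : β * β = k * β + 1) :
    ∀ n, (α - β) * kFib k n = α ^ n - β ^ n := by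
  intro n
  induction n using Nat.twoStepInduction with
  | zero => simp [kFib]
  | one => simp [kFib]
  | more m ih1 ih2 =>
    have : kFib k (m + 2) = k * kFib k (m + 1) + kFib k m := rfl
    rw [this]
    have e1 : α ^ (m + 2) = (k * α + 1) * α ^ m := by rw [← ha]; ring
    have e2 : β ^ (m + 2) = (k * β + 1) * β ^ m := by rw [← hb]; ring
    rw [e1, e2]
    linear_combination k * ih2 + ih1

theorem stmt18 (k : ℝ) (hk : 0 < k) (α β : ℝ)
    (hα : α = (k + Real.sqrt (k ^ 2 + 4)) / 2)
    (hβ : β = (k - Real.sqrt (k ^ 2 + 4)) / 2) (n : ℕ) :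
    Q k n = (α - β)⁻¹ •
      (((1 : Bicomplex) + α • bi + (α ^ 2) • bj + (α ^ 3) • (bi * bj)) * algebraMap ℝ Bicomplex (α ^ n)
        - ((1 : Bicomplex) + β • bi + (β ^ 2) • bj + (β ^ 3) • (bi * bj)) * algebraMap ℝ Bicomplex (β ^ n)) := by
  have hs : (0:ℝ) < Real.sqrt (k ^ 2 + 4) := Real.sqrt_pos.2 (by positivity)
  have hsq : Real.sqrt (k ^ 2 + 4) ^ 2 = k ^ 2 + 4 := Real.sq_sqrt (by positivity)
  have hsum : α + β = k := by rw [hα, hβ]; ring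
  have hprod : α * β = -1 := by rw [hα, hβ]; nlinarith [hsq]
  have hdiff : α - β = Real.sqrt (k ^ 2 + 4) := by rw [hα, hβ]; ring
  have hne : α - β ≠ 0 := by rw [hdiff]; exact ne_of_gt hs
  have ha : α * α = k * α + 1 := by nlinarith [hsum, hprod]
  have hb : β * β = k * β + 1 := by nlinarith [hsum, hprod]
  have hF : ∀ m, kFib k m = (α - β)⁻¹ * (α ^ m - β ^ m) := by
    intro m
    have := binet_aux k α β ha hb m
    field_simp
    linarith [this]
  rw [Q, hF n, hF (n+1), hF (n+2), hF (n+3),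
    Algebra.algebraMap_eq_smul_one, Algebra.algebraMap_eq_smul_one,
    Algebra.algebraMap_eq_smul_one]
  simp only [mul_smul_comm, smul_mul_assoc, mul_one, one_mul, smul_smul, add_mul]
  module
end
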